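/- Let $t_1,\dots,t_B$ be nonnegative reals with $\sum_{i=1}^B t_i = T$, and let $R_1,\dots,R_B$ be independent Rademacher random variables. Define $X = \sum_{i=1}^B t_i R_i$. Then $\mathbf{E}[|X|] \geq \frac{T}{\sqrt{3B}}$. -/

import Mathlib

open MeasureTheory ProbabilityTheory

theorem stmt_3 {Ω : Type*} [MeasurableSpace Ω] (P : Measure Ω) [IsProbabilityMeasure P]
    (B : ℕ) (hB : 1 ≤ B) (t : Fin B → ℝ) (ht : ∀ i, 0 ≤ t i) (T : ℝ) (hT : 0 < T)
    (hsum : ∑ i, t i = T)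
    (R : Fin B → Ω → ℝ) (hmeas : ∀ i, Measurable (R i))
    (hindep : iIndepFun R P)
    (hlaw : ∀ i, Measure.map (R i) P
      = (1/2 : ENNReal) • Measure.dirac (1 : ℝ) + (1/2 : ENNReal) • Measure.dirac (-1 : ℝ)) :
    ∫ ω, |∑ i, t i * R i ω| ∂P ≥ T / Real.sqrt (3 * B) := by
  classical
  -- measurability of partial sums
  have hXSm : ∀ S : Finset (Fin B), Measurable (fun ω => ∑ i ∈ S, t i * R i ω) := by
    intro S
    exact Finset.measurable_sum S fun i _ => (hmeas i).const_mul (t i)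
  -- a.e. each R i squares to 1
  have hRsq : ∀ i, ∀ᵐ ω ∂P, (R i ω) ^ 2 = 1 := by
    intro i
    have hs : MeasurableSet {x : ℝ | x ^ 2 = 1} :=
      measurableSet_eq_fun (by fun_prop) measurable_const
    have h0 : P ((R i) ⁻¹' {x : ℝ | x ^ 2 = 1}ᶜ) = 0 := by
      rw [← Measure.map_apply (hmeas i) hs.compl, hlaw i]
      have h1 : (1:ℝ) ∈ {x : ℝ | x ^ 2 = 1} := by norm_num
      have h2 : (-1:ℝ) ∈ {x : ℝ | x ^ 2 = 1} := by norm_num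
      simp [Measure.dirac_apply' _ hs.compl, Set.indicator_apply, h1, h2]
    rw [ae_iff]
    exact h0
  -- a.e. all R i have absolute value 1
  have hRabs : ∀ᵐ ω ∂P, ∀ i, |R i ω| = 1 := by
    rw [ae_all_iff]
    intro i
    filter_upwards [hRsq i] with ω hω
    have h1 : (|R i ω| - 1) * (|R i ω| + 1) = 0 := by
      have := sq_abs (R i ω); nlinarith
    rcases mul_eq_zero.1 h1 with h | h
    · linarith
    · nlinarith [abs_nonneg (R i ω)]
  -- a.e. bound on partial sums
  have hXb : ∀ S : Finset (Fin B), ∀ᵐ ω ∂P, |∑ i ∈ S, t i * R i ω| ≤ T := by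
    intro S
    filter_upwards [hRabs] with ω hω
    calc |∑ i ∈ S, t i * R i ω| ≤ ∑ i ∈ S, |t i * R i ω| := Finset.abs_sum_le_sum_abs _ _
      _ = ∑ i ∈ S, t i := by
          refine Finset.sum_congr rfl fun i _ => ?_
          rw [abs_mul, hω i, mul_one, abs_of_nonneg (ht i)]
      _ ≤ ∑ i, t i := Finset.sum_le_sum_of_subset_of_nonneg (Finset.subset_univ S)
          (fun i _ _ => ht i)
      _ = T := hsum
  -- integrability helper
  have hbd : ∀ (f : Ω → ℝ) (C : ℝ), Measurable f → (∀ᵐ ω ∂P, |f ω| ≤ C) →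
      Integrable f P := by
    intro f C hf h
    refine Integrable.mono' (integrable_const C) hf.aestronglyMeasurable ?_
    simpa [Real.norm_eq_abs] using h
  -- integrability of mixed powers
  have hIntYR : ∀ (S : Finset (Fin B)) (a : Fin B) (m k : ℕ),
      Integrable (fun ω => (∑ i ∈ S, t i * R i ω) ^ m * R a ω ^ k) P := by
    intro S a m k
    refine hbd _ (T ^ m) (((hXSm S).pow_const m).mul ((hmeas a).pow_const k)) ?_
    filter_upwards [hXb S, hRabs] with ω h1 h2
    rw [abs_mul, abs_pow, abs_pow, h2 a, one_pow, mul_one]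
    exact pow_le_pow_left₀ (abs_nonneg _) h1 m
  have hIntY : ∀ (S : Finset (Fin B)) (m : ℕ),
      Integrable (fun ω => (∑ i ∈ S, t i * R i ω) ^ m) P := by
    intro S m
    simpa using hIntYR S ⟨0, hB⟩ m 0
  have hIntRi : ∀ i, Integrable (R i) P := by
    intro i
    refine hbd _ 1 (hmeas i) ?_
    filter_upwards [hRabs] with ω hω using le_of_eq (hω i)
  -- mean of each R i is 0
  have hER : ∀ i, ∫ ω, R i ω ∂P = 0 := by
    intro i
    have h1 : ∫ ω, R i ω ∂P = ∫ x, x ∂(Measure.map (R i) P) :=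
      (integral_map (hmeas i).aemeasurable aestronglyMeasurable_id).symm
    rw [h1, hlaw i]
    have hid : ∀ a : ℝ, Integrable (fun x : ℝ => x) (Measure.dirac a) := by
      intro a
      refine ⟨aestronglyMeasurable_id, ?_⟩
      simp [HasFiniteIntegral, lintegral_dirac]
    rw [integral_add_measure (((hid 1).smul_measure (by norm_num)))
      (((hid (-1)).smul_measure (by norm_num)))]
    rw [integral_smul_measure, integral_smul_measure, integral_dirac, integral_dirac]
    norm_num
  -- mean of each partial sum is 0
  have hEY : ∀ S : Finset (Fin B), ∫ ω, (∑ i ∈ S, t i * R i ω) ∂P = 0 := by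
    intro S
    rw [integral_finset_sum S fun i _ => (hIntRi i).const_mul (t i)]
    refine Finset.sum_eq_zero fun i _ => ?_
    have : (fun a => t i * R i a) = fun a => t i • R i a := rfl
    rw [this, integral_smul, hER i, smul_zero]
  -- independence of a partial sum from a fresh coordinate
  have hIndS : ∀ (S : Finset (Fin B)) (a : Fin B), a ∉ S →
      IndepFun (fun ω => ∑ i ∈ S, t i * R i ω) (R a) P := by
    intro S a ha
    have hgm : ∀ i : Fin B, Measurable (fun x : ℝ => if i = a then x else t i * x) := by
      intro i
      by_cases h : i = a
      · simpa [h] using measurable_id'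
      · simpa [h] using (measurable_id.const_mul (t i))
    have hcomp : iIndepFun
        (fun i => (fun x : ℝ => if i = a then x else t i * x) ∘ R i) P :=
      hindep.comp _ hgm
    have hkey := hcomp.indepFun_finsetSum_of_notMem
      (fun i => (hgm i).comp (hmeas i)) ha
    have e1 : (∑ j ∈ S, (fun x : ℝ => if j = a then x else t j * x) ∘ R j)
        = fun ω => ∑ i ∈ S, t i * R i ω := by
      funext ω
      rw [Finset.sum_apply]
      refine Finset.sum_congr rfl fun j hj => ?_
      have : j ≠ a := fun h => ha (h ▸ hj)
      simp [Function.comp, this]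
    have e2 : ((fun x : ℝ => if a = a then x else t a * x) ∘ R a) = R a := by
      funext ω; simp [Function.comp]
    rw [e1, e2] at hkey
    exact hkey
  -- second and fourth moments by induction
  have hMom : ∀ S : Finset (Fin B),
      (∫ ω, (∑ i ∈ S, t i * R i ω) ^ 2 ∂P = ∑ i ∈ S, t i ^ 2) ∧
      (∫ ω, (∑ i ∈ S, t i * R i ω) ^ 4 ∂P ≤ 3 * (∑ i ∈ S, t i ^ 2) ^ 2) := by
    intro S
    induction S using Finset.induction_on with
    | empty => simp
    | @insert a S ha ih =>
      obtain ⟨ih2, ih4⟩ := ih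
      have hInd := hIndS S a ha
      have hIndm : ∀ m : ℕ, IndepFun (fun ω => (∑ i ∈ S, t i * R i ω) ^ m) (R a) P := by
        intro m
        exact hInd.comp (measurable_id.pow_const m) measurable_id
      have hMix : ∀ m : ℕ, ∫ ω, (∑ i ∈ S, t i * R i ω) ^ m * R a ω ∂P = 0 := by
        intro m
        have h := (hIndm m).integral_mul_eq_mul_integral (hIntY S m).aestronglyMeasurable (hIntRi a).aestronglyMeasurable
        calc ∫ ω, (∑ i ∈ S, t i * R i ω) ^ m * R a ω ∂P
            = ∫ ω, ((fun ω => (∑ i ∈ S, t i * R i ω) ^ m) * R a) ω ∂P := rfl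
          _ = (∫ ω, (∑ i ∈ S, t i * R i ω) ^ m ∂P) * ∫ ω, R a ω ∂P := h
          _ = 0 := by rw [hER a, mul_zero]
      have hr2 : ∫ ω, R a ω ^ 2 ∂P = 1 := by
        have h : (fun ω => R a ω ^ 2) =ᵐ[P] fun _ => (1:ℝ) := by
          filter_upwards [hRsq a] with ω h using h
        rw [integral_congr_ae h]; simp
      have hr4 : ∫ ω, R a ω ^ 4 ∂P = 1 := by
        have h : (fun ω => R a ω ^ 4) =ᵐ[P] fun _ => (1:ℝ) := by
          filter_upwards [hRsq a] with ω h
          have : R a ω ^ 4 = (R a ω ^ 2) ^ 2 := by ring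
          rw [this, h]; norm_num
        rw [integral_congr_ae h]; simp
      have I11 : Integrable (fun ω => (∑ i ∈ S, t i * R i ω) * R a ω) P := by
        simpa using hIntYR S a 1 1
      have Ir2 : Integrable (fun ω => R a ω ^ 2) P := by
        simpa using hIntYR S a 0 2
      have Ir4 : Integrable (fun ω => R a ω ^ 4) P := by
        simpa using hIntYR S a 0 4
      have I31 : Integrable (fun ω => (∑ i ∈ S, t i * R i ω) ^ 3 * R a ω) P := by
        simpa using hIntYR S a 3 1
      have I22 : Integrable (fun ω => (∑ i ∈ S, t i * R i ω) ^ 2 * R a ω ^ 2) P := by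
        simpa using hIntYR S a 2 2
      have I13 : Integrable (fun ω => (∑ i ∈ S, t i * R i ω) * R a ω ^ 3) P := by
        simpa using hIntYR S a 1 3
      have hMix1 : ∫ ω, (∑ i ∈ S, t i * R i ω) * R a ω ∂P = 0 := by
        have := hMix 1; simpa using this
      have hMix3 : ∫ ω, (∑ i ∈ S, t i * R i ω) ^ 3 * R a ω ∂P = 0 := hMix 3
      -- ∫ Y^2 * r^2 = ∫ Y^2, ∫ Y * r^3 = ∫ Y * r
      have hY2r2 : ∫ ω, (∑ i ∈ S, t i * R i ω) ^ 2 * R a ω ^ 2 ∂P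
          = ∫ ω, (∑ i ∈ S, t i * R i ω) ^ 2 ∂P := by
        refine integral_congr_ae ?_
        filter_upwards [hRsq a] with ω h
        rw [h, mul_one]
      have hYr3 : ∫ ω, (∑ i ∈ S, t i * R i ω) * R a ω ^ 3 ∂P = 0 := by
        rw [← hMix1]
        refine integral_congr_ae ?_
        filter_upwards [hRsq a] with ω h
        have : R a ω ^ 3 = R a ω ^ 2 * R a ω := by ring
        rw [this, h, one_mul]
      have hsum2 : ∑ i ∈ insert a S, t i ^ 2 = t a ^ 2 + ∑ i ∈ S, t i ^ 2 :=
        Finset.sum_insert ha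
      constructor
      · calc ∫ ω, (∑ i ∈ insert a S, t i * R i ω) ^ 2 ∂P
            = ∫ ω, (t a ^ 2 * R a ω ^ 2 + ((2 * t a) * ((∑ i ∈ S, t i * R i ω) * R a ω)
              + (∑ i ∈ S, t i * R i ω) ^ 2)) ∂P := by
              refine integral_congr_ae (Filter.Eventually.of_forall fun ω => ?_)
              simp only [Finset.sum_insert ha]; ring
          _ = t a ^ 2 * (∫ ω, R a ω ^ 2 ∂P) + ((2 * t a) * (∫ ω, (∑ i ∈ S, t i * R i ω) * R a ω ∂P)
              + ∫ ω, (∑ i ∈ S, t i * R i ω) ^ 2 ∂P) := by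
              have J1 : Integrable (fun ω => t a ^ 2 * R a ω ^ 2) P := Ir2.const_mul _
              have J2 : Integrable (fun ω => (2 * t a) * ((∑ i ∈ S, t i * R i ω) * R a ω)) P :=
                I11.const_mul _
              have J3 : Integrable
                  (fun ω => (2 * t a) * ((∑ i ∈ S, t i * R i ω) * R a ω)
                    + (∑ i ∈ S, t i * R i ω) ^ 2) P := J2.add (hIntY S 2)
              rw [integral_add J1 J3, integral_add J2 (hIntY S 2), integral_const_mul,
                integral_const_mul]
          _ = ∑ i ∈ insert a S, t i ^ 2 := by
              rw [hr2, hMix1, ih2, hsum2]; ring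
      · calc ∫ ω, (∑ i ∈ insert a S, t i * R i ω) ^ 4 ∂P
            = ∫ ω, (t a ^ 4 * R a ω ^ 4 + ((4 * t a ^ 3) * ((∑ i ∈ S, t i * R i ω) * R a ω ^ 3)
              + ((6 * t a ^ 2) * ((∑ i ∈ S, t i * R i ω) ^ 2 * R a ω ^ 2)
              + ((4 * t a) * ((∑ i ∈ S, t i * R i ω) ^ 3 * R a ω)
              + (∑ i ∈ S, t i * R i ω) ^ 4)))) ∂P := by
              refine integral_congr_ae (Filter.Eventually.of_forall fun ω => ?_)
              simp only [Finset.sum_insert ha]; ring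
          _ = t a ^ 4 * (∫ ω, R a ω ^ 4 ∂P)
              + ((4 * t a ^ 3) * (∫ ω, (∑ i ∈ S, t i * R i ω) * R a ω ^ 3 ∂P)
              + ((6 * t a ^ 2) * (∫ ω, (∑ i ∈ S, t i * R i ω) ^ 2 * R a ω ^ 2 ∂P)
              + ((4 * t a) * (∫ ω, (∑ i ∈ S, t i * R i ω) ^ 3 * R a ω ∂P)
              + ∫ ω, (∑ i ∈ S, t i * R i ω) ^ 4 ∂P))) := by
              have K1 : Integrable (fun ω => t a ^ 4 * R a ω ^ 4) P := Ir4.const_mul _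
              have K2 : Integrable
                  (fun ω => (4 * t a ^ 3) * ((∑ i ∈ S, t i * R i ω) * R a ω ^ 3)) P :=
                I13.const_mul _
              have K3 : Integrable
                  (fun ω => (6 * t a ^ 2) * ((∑ i ∈ S, t i * R i ω) ^ 2 * R a ω ^ 2)) P :=
                I22.const_mul _
              have K4 : Integrable
                  (fun ω => (4 * t a) * ((∑ i ∈ S, t i * R i ω) ^ 3 * R a ω)) P :=
                I31.const_mul _
              have K45 : Integrable
                  (fun ω => (4 * t a) * ((∑ i ∈ S, t i * R i ω) ^ 3 * R a ω)
                    + (∑ i ∈ S, t i * R i ω) ^ 4) P := K4.add (hIntY S 4)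
              have K345 : Integrable
                  (fun ω => (6 * t a ^ 2) * ((∑ i ∈ S, t i * R i ω) ^ 2 * R a ω ^ 2)
                    + ((4 * t a) * ((∑ i ∈ S, t i * R i ω) ^ 3 * R a ω)
                    + (∑ i ∈ S, t i * R i ω) ^ 4)) P := K3.add K45
              have K2345 : Integrable
                  (fun ω => (4 * t a ^ 3) * ((∑ i ∈ S, t i * R i ω) * R a ω ^ 3)
                    + ((6 * t a ^ 2) * ((∑ i ∈ S, t i * R i ω) ^ 2 * R a ω ^ 2)
                    + ((4 * t a) * ((∑ i ∈ S, t i * R i ω) ^ 3 * R a ω)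
                    + (∑ i ∈ S, t i * R i ω) ^ 4))) P := K2.add K345
              rw [integral_add K1 K2345, integral_add K2 K345, integral_add K3 K45,
                integral_add K4 (hIntY S 4),
                integral_const_mul, integral_const_mul, integral_const_mul, integral_const_mul]
          _ = t a ^ 4 + 6 * t a ^ 2 * (∑ i ∈ S, t i ^ 2)
              + ∫ ω, (∑ i ∈ S, t i * R i ω) ^ 4 ∂P := by
              rw [hr4, hYr3, hY2r2, hMix3, ih2]; ring
          _ ≤ 3 * (∑ i ∈ insert a S, t i ^ 2) ^ 2 := by
              rw [hsum2]
              nlinarith [sq_nonneg (t a), sq_nonneg (t a ^ 2),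
                Finset.sum_nonneg fun i (_ : i ∈ S) => sq_nonneg (t i)]
  -- notation for the final part
  obtain ⟨h2, h4⟩ := hMom Finset.univ
  have hXm : Measurable (fun ω => ∑ i, t i * R i ω) := hXSm Finset.univ
  set A : ℝ := ∫ ω, |∑ i, t i * R i ω| ∂P with hA
  have hA0 : 0 ≤ A := integral_nonneg fun ω => abs_nonneg _
  have hM0 : 0 ≤ ∫ ω, (∑ i, t i * R i ω) ^ 4 ∂P :=
    integral_nonneg fun ω => by positivity
  -- Cauchy-Schwarz on the coefficients
  have hCS : T ^ 2 ≤ (B : ℝ) * ∑ i, t i ^ 2 := by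
    have h := sq_sum_le_card_mul_sum_sq (s := (Finset.univ : Finset (Fin B))) (f := t)
    simpa [hsum] using h
  have hs_pos : 0 < ∑ i, t i ^ 2 := by
    by_contra h
    push_neg at h
    have hB1 : (0:ℝ) < B := by positivity
    nlinarith
  -- Hölder's inequality
  have hpq : Real.HolderConjugate (3/2) 3 := ⟨by norm_num, by norm_num, by norm_num⟩
  have hfmeas : Measurable (fun ω => |∑ i, t i * R i ω| ^ ((2:ℝ)/3)) := by fun_prop
  have hgmeas : Measurable (fun ω => |∑ i, t i * R i ω| ^ ((4:ℝ)/3)) := by fun_prop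
  have hfLp : MemLp (fun ω => |∑ i, t i * R i ω| ^ ((2:ℝ)/3)) (ENNReal.ofReal (3/2)) P := by
    refine MemLp.of_bound hfmeas.aestronglyMeasurable ((T + 1) ^ ((2:ℝ)/3)) ?_
    filter_upwards [hXb Finset.univ] with ω hω
    rw [Real.norm_eq_abs, abs_of_nonneg (Real.rpow_nonneg (abs_nonneg _) _)]
    exact Real.rpow_le_rpow (abs_nonneg _) (by linarith) (by norm_num)
  have hgLp : MemLp (fun ω => |∑ i, t i * R i ω| ^ ((4:ℝ)/3)) (ENNReal.ofReal 3) P := by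
    refine MemLp.of_bound hgmeas.aestronglyMeasurable ((T + 1) ^ ((4:ℝ)/3)) ?_
    filter_upwards [hXb Finset.univ] with ω hω
    rw [Real.norm_eq_abs, abs_of_nonneg (Real.rpow_nonneg (abs_nonneg _) _)]
    exact Real.rpow_le_rpow (abs_nonneg _) (by linarith) (by norm_num)
  have hHolder := integral_mul_le_Lp_mul_Lq_of_nonneg (μ := P) hpq
    (Filter.Eventually.of_forall fun ω => Real.rpow_nonneg (abs_nonneg _) _)
    (Filter.Eventually.of_forall fun ω => Real.rpow_nonneg (abs_nonneg _) _) hfLp hgLp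
  -- rewrite the three integrals in Hölder's inequality
  have eL : ∫ ω, |∑ i, t i * R i ω| ^ ((2:ℝ)/3) * |∑ i, t i * R i ω| ^ ((4:ℝ)/3) ∂P
      = ∫ ω, (∑ i, t i * R i ω) ^ 2 ∂P := by
    refine integral_congr_ae (Filter.Eventually.of_forall fun ω => ?_)
    beta_reduce
    rw [← Real.rpow_add' (abs_nonneg _) (by norm_num)]
    norm_num
  have eF : ∫ ω, (|∑ i, t i * R i ω| ^ ((2:ℝ)/3)) ^ ((3:ℝ)/2) ∂P
      = ∫ ω, |∑ i, t i * R i ω| ∂P := by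
    refine integral_congr_ae (Filter.Eventually.of_forall fun ω => ?_)
    beta_reduce
    rw [← Real.rpow_mul (abs_nonneg _)]
    norm_num
  have eG : ∫ ω, (|∑ i, t i * R i ω| ^ ((4:ℝ)/3)) ^ ((3:ℝ)) ∂P
      = ∫ ω, (∑ i, t i * R i ω) ^ 4 ∂P := by
    refine integral_congr_ae (Filter.Eventually.of_forall fun ω => ?_)
    beta_reduce
    rw [← Real.rpow_mul (abs_nonneg _)]
    norm_num
    rw [← abs_pow,
      abs_of_nonneg (by positivity : (0:ℝ) ≤ (∑ i, t i * R i ω) ^ 4)]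
  rw [eL, eF, eG, h2] at hHolder
  -- from Hölder: s ≤ A^(2/3) * M^(1/3)
  have hHolder' : ∑ i, t i ^ 2 ≤ A ^ ((2:ℝ)/3) * (∫ ω, (∑ i, t i * R i ω) ^ 4 ∂P) ^ ((1:ℝ)/3) := by
    have h32 : (1:ℝ) / (3/2) = 2/3 := by norm_num
    rw [h32] at hHolder
    exact hHolder
  -- cube it
  have hcube : (∑ i, t i ^ 2) ^ 3 ≤ A ^ 2 * ∫ ω, (∑ i, t i * R i ω) ^ 4 ∂P := by
    have hc : (A ^ ((2:ℝ)/3) * (∫ ω, (∑ i, t i * R i ω) ^ 4 ∂P) ^ ((1:ℝ)/3)) ^ 3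
        = A ^ 2 * ∫ ω, (∑ i, t i * R i ω) ^ 4 ∂P := by
      rw [mul_pow, ← Real.rpow_natCast (A ^ ((2:ℝ)/3)) 3,
        ← Real.rpow_natCast ((∫ ω, (∑ i, t i * R i ω) ^ 4 ∂P) ^ ((1:ℝ)/3)) 3,
        ← Real.rpow_mul hA0, ← Real.rpow_mul hM0]
      norm_num
    calc (∑ i, t i ^ 2) ^ 3
        ≤ (A ^ ((2:ℝ)/3) * (∫ ω, (∑ i, t i * R i ω) ^ 4 ∂P) ^ ((1:ℝ)/3)) ^ 3 := by
          refine pow_le_pow_left₀ (le_of_lt hs_pos) hHolder' 3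
      _ = A ^ 2 * ∫ ω, (∑ i, t i * R i ω) ^ 4 ∂P := hc
  -- combine with the fourth-moment bound
  have hfinal : ∑ i, t i ^ 2 ≤ 3 * A ^ 2 := by
    nlinarith [hcube, hs_pos, sq_nonneg A, mul_pos hs_pos hs_pos,
      mul_le_mul_of_nonneg_left h4 (sq_nonneg A)]
  -- conclude
  have h3B : (0:ℝ) < 3 * B := by
    have : (1:ℝ) ≤ B := by exact_mod_cast hB
    linarith
  have hA2 : (T / Real.sqrt (3 * B)) ^ 2 ≤ A ^ 2 := by
    rw [div_pow, Real.sq_sqrt h3B.le]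
    rw [div_le_iff₀ h3B]
    calc T ^ 2 ≤ (B : ℝ) * ∑ i, t i ^ 2 := hCS
      _ ≤ (B : ℝ) * (3 * A ^ 2) := by
          have hB0 : (0:ℝ) ≤ B := by positivity
          exact mul_le_mul_of_nonneg_left hfinal hB0
      _ = A ^ 2 * (3 * B) := by ring
  have hTd : 0 ≤ T / Real.sqrt (3 * B) := by positivity
  calc A = Real.sqrt (A ^ 2) := (Real.sqrt_sq hA0).symm
    _ ≥ Real.sqrt ((T / Real.sqrt (3 * B)) ^ 2) := Real.sqrt_le_sqrt hA2
    _ = T / Real.sqrt (3 * B) := Real.sqrt_sq hTd
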